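/- Let Γ be a group and G a compact Hausdorff topological group. Suppose that for every finitely generated subgroup S of Γ a group homomorphism h_S : S → G is given, such that whenever S ≤ S' the restriction h_{S'}|_S is conjugate to h_S (there exists g ∈ G with h_{S'}(s) = g^{-1} h_S(s) g for all s ∈ S). Then there exists a group homomorphism H : Γ → G such that for every finitely generated subgroup S of Γ the restriction H|_S is conjugate to h_S. -/

import Mathlib

lemma Subgroup.FG.sup' {Γ : Type*} [Group Γ] {S S' : Subgroup Γ} (hS : S.FG) (hS' : S'.FG) :
    (S ⊔ S').FG := by
  rw [Subgroup.fg_iff] at hS hS' ⊢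
  obtain ⟨T, rfl, hT⟩ := hS
  obtain ⟨T', rfl, hT'⟩ := hS'
  exact ⟨T ∪ T', Subgroup.closure_union T T', hT.union hT'⟩

lemma fg_finset_sup {Γ ι : Type*} [Group Γ] (t : Finset ι) (K : ι → Subgroup Γ)
    (hK : ∀ i, (K i).FG) : (⨆ i ∈ t, K i).FG := by
  classical
  induction t using Finset.induction with
  | empty => simp; exact ⟨∅, by simp⟩
  | insert _ _ hni ih =>
      rw [Finset.iSup_insert]
      exact Subgroup.FG.sup' (hK _) ih

/-- Given, for every finitely generated subgroup `S` of `Γ`, a homomorphism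
`h_S : S → G` into a compact Hausdorff topological group, such that `h_{S'}|_S` is
conjugate to `h_S` whenever `S ≤ S'`, there is a homomorphism `H : Γ → G` whose
restriction to each finitely generated subgroup `S` is conjugate to `h_S`. -/
theorem exists_hom_of_conjugacy_compatible_family
    {Γ G : Type*} [Group Γ] [Group G] [TopologicalSpace G] [IsTopologicalGroup G]
    [CompactSpace G] [T2Space G]
    (h : ∀ S : Subgroup Γ, S.FG → (S →* G))
    (hcompat : ∀ (S S' : Subgroup Γ) (hS : S.FG) (hS' : S'.FG) (hle : S ≤ S'),
      ∃ g : G, ∀ s : S, h S' hS' (Subgroup.inclusion hle s) = g⁻¹ * h S hS s * g) :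
    ∃ H : Γ →* G, ∀ (S : Subgroup Γ) (hS : S.FG),
      ∃ g : G, ∀ s : S, H s = g⁻¹ * h S hS s * g := by
  classical
  -- index type for the family of closed sets
  let ι := (Γ × Γ) ⊕ {S : Subgroup Γ // S.FG}
  let Z : ι → Set (Γ → G) := fun i =>
    match i with
    | Sum.inl (x, y) => {f | f (x * y) = f x * f y}
    | Sum.inr ⟨S, hS⟩ => {f | ∃ g : G, ∀ s : S, f s = g⁻¹ * h S hS s * g}
  have hZc : ∀ i, IsClosed (Z i) := by
    rintro (⟨x, y⟩ | ⟨S, hS⟩)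
    · exact isClosed_eq (continuous_apply (x*y)) ((continuous_apply x).mul (continuous_apply y))
    · -- image of a compact set under projection
      have : Z (Sum.inr ⟨S, hS⟩) =
          Prod.fst '' {p : (Γ → G) × G | ∀ s : S, p.1 s = p.2⁻¹ * h S hS s * p.2} := by
        ext f
        constructor
        · rintro ⟨g, hg⟩; exact ⟨(f, g), hg, rfl⟩
        · rintro ⟨⟨f', g⟩, hg, rfl⟩; exact ⟨g, hg⟩
      rw [this]
      refine (IsCompact.image ?_ continuous_fst).isClosed
      refine IsClosed.isCompact ?_
      have : {p : (Γ → G) × G | ∀ s : S, p.1 s = p.2⁻¹ * h S hS s * p.2} =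
          ⋂ s : S, {p : (Γ → G) × G | p.1 s = p.2⁻¹ * h S hS s * p.2} := by
        ext p; simp
      rw [this]
      refine isClosed_iInter fun s => isClosed_eq ?_ ?_
      · exact (continuous_apply _).comp continuous_fst
      · exact ((continuous_snd.inv.mul continuous_const).mul continuous_snd)
  -- the subgroup associated to an index
  let K : ι → Subgroup Γ := fun i =>
    match i with
    | Sum.inl (x, y) => Subgroup.closure {x, y}
    | Sum.inr ⟨S, _⟩ => S
  have hKfg : ∀ i, (K i).FG := by
    rintro (⟨x, y⟩ | ⟨S, hS⟩)
    · exact ⟨{x, y}, by simp; rfl⟩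
    · exact hS
  -- finite intersection property
  have hfin : ∀ t : Finset ι, (Set.univ ∩ ⋂ i ∈ t, Z i).Nonempty := by
    intro t
    set S' : Subgroup Γ := ⨆ i ∈ t, K i with hS'def
    have hS' : S'.FG := fg_finset_sup t K hKfg
    have hle : ∀ i ∈ t, K i ≤ S' := fun i hi => le_biSup K hi
    refine ⟨fun x => if hx : x ∈ S' then h S' hS' ⟨x, hx⟩ else 1, Set.mem_univ _, ?_⟩
    simp only [Set.mem_iInter]
    rintro (⟨x, y⟩ | ⟨S, hS⟩) hi
    · have hx : x ∈ S' := hle _ hi (Subgroup.subset_closure (by simp))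
      have hy : y ∈ S' := hle _ hi (Subgroup.subset_closure (by simp))
      have hxy : x * y ∈ S' := mul_mem hx hy
      show (if hz : x * y ∈ S' then h S' hS' ⟨x * y, hz⟩ else 1) =
        (if hz : x ∈ S' then h S' hS' ⟨x, hz⟩ else 1) *
        (if hz : y ∈ S' then h S' hS' ⟨y, hz⟩ else 1)
      rw [dif_pos hxy, dif_pos hx, dif_pos hy]
      exact map_mul (h S' hS') ⟨x, hx⟩ ⟨y, hy⟩
    · obtain ⟨g, hg⟩ := hcompat S S' hS hS' (hle _ hi)
      refine ⟨g, fun s => ?_⟩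
      have hs : (s : Γ) ∈ S' := hle _ hi s.2
      show (if hz : (s : Γ) ∈ S' then h S' hS' ⟨s, hz⟩ else 1) = _
      rw [dif_pos hs]
      exact hg s
  -- compactness
  have hne : (Set.univ ∩ ⋂ i, Z i).Nonempty := by
    by_contra hc
    rw [Set.not_nonempty_iff_eq_empty] at hc
    obtain ⟨t, ht⟩ := isCompact_univ.elim_finite_subfamily_closed Z hZc hc
    exact (hfin t).ne_empty ht
  obtain ⟨f, -, hf⟩ := hne
  rw [Set.mem_iInter] at hf
  have hmul : ∀ x y : Γ, f (x * y) = f x * f y := fun x y => hf (Sum.inl (x, y))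
  refine ⟨MonoidHom.mk' f hmul, fun S hS => hf (Sum.inr ⟨S, hS⟩)⟩
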